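/- Let F be a field of characteristic not 2, a, b ∈ F with a ≠ b. The maps φ(X,Y,Z) = (bX − aY, (b − a)Z, Y − X) and ψ(U,V,W) = (U + aW, U + bW, V) are mutually inverse as maps of projective points between the curves X(aY² − Z²) = Y(bX² − Z²) and V²W = U(U + aW)(U + bW): for any projective point (X:Y:Z) on the first curve, ψ(φ(X,Y,Z)) is projectively equal to (X:Y:Z), and for any (U:V:W) on the second, φ(ψ(U,V,W)) is projectively equal to (U:V:W). -/

import Mathlib

/-- The maps `φ(X,Y,Z) = (bX − aY, (b−a)Z, Y − X)` and `ψ(U,V,W) = (U + aW, U + bW, V)` are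
mutually inverse as maps of projective points between the generalized Huff curve
`X(aY² − Z²) = Y(bX² − Z²)` and the Weierstrass curve `V²W = U(U + aW)(U + bW)`. -/
theorem huff_weierstrass_inverse {F : Type*} [Field F] (a b : F)
    (h2 : (2 : F) ≠ 0) (hab : a ≠ b) :
    (∀ X Y Z : F, ¬(X = 0 ∧ Y = 0 ∧ Z = 0) →
      X * (a * Y ^ 2 - Z ^ 2) = Y * (b * X ^ 2 - Z ^ 2) →
      ∃ c : F, c ≠ 0 ∧
        ((b * X - a * Y) + a * (Y - X), (b * X - a * Y) + b * (Y - X), (b - a) * Z)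
          = (c * X, c * Y, c * Z)) ∧
    (∀ U V W : F, ¬(U = 0 ∧ V = 0 ∧ W = 0) →
      V ^ 2 * W = U * (U + a * W) * (U + b * W) →
      ∃ c : F, c ≠ 0 ∧
        (b * (U + a * W) - a * (U + b * W), (b - a) * V, (U + b * W) - (U + a * W))
          = (c * U, c * V, c * W)) := by
  constructor
  · intro X Y Z _ _
    exact ⟨b - a, sub_ne_zero.mpr hab.symm, by simp only [Prod.mk.injEq]; refine ⟨by ring, by ring, trivial⟩⟩
  · intro U V W _ _
    exact ⟨b - a, sub_ne_zero.mpr hab.symm, by simp only [Prod.mk.injEq]; refine ⟨by ring, trivial, by ring⟩⟩
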